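/- Let (V, L, ∂) be a crossed module over a Lie algebra with cokernel g and kernel M, and let s, s̄ : g → L be two linear sections of π and q a section of ∂. Then the associated 3-cocycles θ_{s,q} and θ_{s̄,q} differ by a Chevalley-Eilenberg coboundary: there exists c : ∧²g → M with θ_{s,q} - θ_{s̄,q} = δc. In fact one may take c = g - ḡ - b where b(x,y) = [s(x), h(y)] - h([x,y]) - [s(y), h(x)] - [∂h(x), h(y)] and h : g → V is any linear map with s - s̄ = ∂ ∘ h. -/
import Mathlib


variable {K L V g : Type} [Field K] [LieRing L] [LieAlgebra K L]
  [AddCommGroup V] [Module K V] [LieRingModule L V] [LieModule K L V]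
  [LieRing g] [LieAlgebra K g]

/-- `g(x,y) = q([s(x), s(y)] - s[x,y])`. -/
def gAux (s : g →ₗ[K] L) (q : L →ₗ[K] V) (x y : g) : V :=
  q (⁅s x, s y⁆ - s ⁅x, y⁆)

/-- The `3`-cochain `θ` associated to a crossed module with chosen sections `s`, `q`. -/
def theta (s : g →ₗ[K] L) (q : L →ₗ[K] V) (x y z : g) : V :=
  ⁅s x, gAux s q y z⁆ - ⁅s y, gAux s q x z⁆ + ⁅s z, gAux s q x y⁆
    - gAux s q ⁅x, y⁆ z + gAux s q ⁅x, z⁆ y - gAux s q ⁅y, z⁆ x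

/-- The `2`-cochain `b(x,y) = [s(x), h(y)] - h([x,y]) - [s(y), h(x)] - [∂h(x), h(y)]`. -/
def bAux (d : V →ₗ[K] L) (s : g →ₗ[K] L) (h : g →ₗ[K] V) (x y : g) : V :=
  ⁅s x, h y⁆ - h ⁅x, y⁆ - ⁅s y, h x⁆ - ⁅d (h x), h y⁆

/-- the `3`-cocycles associated to two different sections `s`, `s'` of `π`
differ by the Chevalley-Eilenberg coboundary of `c = g - ḡ - b`. -/
theorem crossed_ext_stmt8
    (d : V →ₗ[K] L)
    (hmod : ∀ (x : L) (v : V), d ⁅x, v⁆ = ⁅x, d v⁆)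
    (hcross : ∀ v w : V, ⁅d v, w⁆ = - ⁅d w, v⁆)
    (π : L →ₗ⁅K⁆ g) (hπ : Function.Surjective π)
    (hker : ∀ z : L, π z = 0 ↔ z ∈ LinearMap.range d)
    (s s' : g →ₗ[K] L) (hs : ∀ x : g, π (s x) = x) (hs' : ∀ x : g, π (s' x) = x)
    (q : L →ₗ[K] V) (hq : ∀ z ∈ LinearMap.range d, d (q z) = z)
    (h : g →ₗ[K] V) (hh : ∀ x : g, s x - s' x = d (h x)) :
    let c : g → g → V := fun x y => gAux s q x y - gAux s' q x y - bAux d s h x y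
    (∀ x y : g, d (c x y) = 0) ∧
    (∀ x y z : g,
      theta s q x y z - theta s' q x y z =
        ⁅s x, c y z⁆ - ⁅s y, c x z⁆ + ⁅s z, c x y⁆
          - c ⁅x, y⁆ z + c ⁅x, z⁆ y - c ⁅y, z⁆ x) := by
  intro c
  have hc : ∀ u v : g, c u v = gAux s q u v - gAux s' q u v - bAux d s h u v :=
    fun u v => rfl
  have hd : ∀ a : g, d (h a) = s a - s' a := fun a => (hh a).symm
  have hs2 : ∀ a : g, s a = s' a + d (h a) := fun a => by rw [← hh a]; abel
  have hs2' : ∀ a : g, s' a = s a - d (h a) := fun a => by rw [← hh a]; abel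
  have hdg : ∀ (t : g →ₗ[K] L), (∀ u : g, π (t u) = u) →
      ∀ u v : g, d (gAux t q u v) = ⁅t u, t v⁆ - t ⁅u, v⁆ := by
    intro t ht u v
    refine hq _ ((hker _).mp ?_)
    simp [LieHom.map_lie, ht]
  have hdgs := hdg s hs
  have hdgs' := hdg s' hs'
  constructor
  · intro u v
    rw [hc, bAux]
    simp only [map_sub, hdgs, hdgs', hmod, hd]
    simp only [lie_sub, sub_lie]
    linear_combination (norm := abel1) (- lie_skew (s u) (s v) + lie_skew (s' u) (s v))
  · intro x y z
    have key : ∀ a b' c' : g, ⁅s a, gAux s' q b' c'⁆ =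
        ⁅s' a, gAux s' q b' c'⁆ - ⁅s' b', ⁅s' c', h a⁆⁆ + ⁅s' c', ⁅s' b', h a⁆⁆
          + ⁅s' ⁅b', c'⁆, h a⁆ := by
      intro a b' c'
      rw [hs2 a, add_lie, hcross (h a), hdgs', sub_lie, lie_lie]
      abel
    have F2 : ∀ (u v : g) (a : L), ⁅d (h u), ⁅a, h v⁆⁆ =
        ⁅d (h v), ⁅a, h u⁆⁆ + ⁅a, ⁅d (h u), h v⁆⁆ := by
      intro u v a
      rw [hcross (h u), hmod, lie_lie, hcross (h v) (h u), lie_neg]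
      abel
    have G1 : ⁅d (h x), ⁅d (h z), h y⁆⁆ = - ⁅d (h x), ⁅d (h y), h z⁆⁆ := by
      rw [hcross (h z) (h y), lie_neg]
    have e0 : (⁅⁅x, y⁆, z⁆ : g) - ⁅⁅x, z⁆, y⁆ + ⁅⁅y, z⁆, x⁆ = 0 := by
      rw [lie_lie, lie_lie, lie_lie,
        show (⁅z, y⁆ : g) = -⁅y, z⁆ by rw [← lie_skew],
        show (⁅z, x⁆ : g) = -⁅x, z⁆ by rw [← lie_skew],
        show (⁅y, x⁆ : g) = -⁅x, y⁆ by rw [← lie_skew],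
        lie_neg, lie_neg, lie_neg]
      have j := lie_jacobi x y z
      rw [show (⁅z, x⁆ : g) = -⁅x, z⁆ by rw [← lie_skew], lie_neg] at j
      rw [show (⁅x, ⁅y, z⁆⁆ : g) - ⁅y, ⁅x, z⁆⁆ - (- ⁅x, ⁅y, z⁆⁆ - ⁅z, ⁅x, y⁆⁆)
            + (- ⁅y, ⁅x, z⁆⁆ - - ⁅z, ⁅x, y⁆⁆) =
          (⁅x, ⁅y, z⁆⁆ + - ⁅y, ⁅x, z⁆⁆ + ⁅z, ⁅x, y⁆⁆)
            + (⁅x, ⁅y, z⁆⁆ + - ⁅y, ⁅x, z⁆⁆ + ⁅z, ⁅x, y⁆⁆) from by abel, j, add_zero]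
    have hJ : h ⁅⁅x, y⁆, z⁆ - h ⁅⁅x, z⁆, y⁆ + h ⁅⁅y, z⁆, x⁆ = 0 := by
      rw [← map_sub, ← map_add, e0, map_zero]
    simp only [hc, theta, bAux]
    simp only [lie_sub, sub_lie, lie_add, add_lie, lie_neg, neg_lie]
    rw [key x y z, key y x z, key z x y]
    simp only [hs2']
    simp only [lie_sub, sub_lie, lie_add, add_lie, lie_neg, neg_lie]
    linear_combination (norm := abel1) F2 y x (s z) - F2 y x (d (h z)) - F2 z x (s y)
      + F2 z y (s x) - F2 z y (d (h x)) + hJ - G1
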